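/- Given a bi-infinite sequence (eᵢ) in R and pairs (a*,b*), (c*,d*) with a*d* - b*c* = 1, there is a unique bi-infinite sequence of pairs (aᵢ,bᵢ) with aᵢbᵢ₊₁ - bᵢaᵢ₊₁ = 1 for all i, (a₀,b₀)=(a*,b*), (a₁,b₁)=(c*,d*), and aᵢ₋₁+aᵢ₊₁ = eᵢaᵢ, bᵢ₋₁+bᵢ₊₁ = eᵢbᵢ for all i ∈ ℤ. -/

import Mathlib

def FareyRec2 {R : Type*} [CommRing R] (c : ℕ → R) (x y : R × R) : ℕ → R × R
  | 0 => x
  | 1 => y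
  | n + 2 => c (n + 1) • FareyRec2 c x y (n + 1) - FareyRec2 c x y n

def FareySeq {R : Type*} [CommRing R] (e : ℤ → R) (x y : R × R) : ℤ → R × R
  | Int.ofNat n => FareyRec2 (fun n => e n) x y n
  | Int.negSucc n => FareyRec2 (fun n => e (-(n : ℤ))) x (e 0 • x - y) (n + 1)

lemma FareySeq_natCast {R : Type*} [CommRing R] (e : ℤ → R) (x y : R × R) (n : ℕ) :
    FareySeq e x y (n : ℤ) = FareyRec2 (fun n => e n) x y n := rfl

lemma FareySeq_neg {R : Type*} [CommRing R] (e : ℤ → R) (x y : R × R) (n : ℕ) :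
    FareySeq e x y (-(n : ℤ)) = FareyRec2 (fun n => e (-(n : ℤ))) x (e 0 • x - y) n := by
  cases n with
  | zero => rfl
  | succ n => rfl

lemma FareySeq_step {R : Type*} [CommRing R] (e : ℤ → R) (x y : R × R) (i : ℤ) :
    FareySeq e x y (i + 1) = e i • FareySeq e x y i - FareySeq e x y (i - 1) := by
  set p := FareyRec2 (fun n : ℕ => e n) x y with hp
  set q := FareyRec2 (fun n : ℕ => e (-(n : ℤ))) x (e 0 • x - y) with hq
  rcases i with n | n
  · cases n with
    | zero =>
      show p 1 = e 0 • p 0 - FareySeq e x y (-(1:ℕ):ℤ)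
      rw [FareySeq_neg]
      show y = e 0 • x - (e 0 • x - y)
      rw [sub_sub_cancel]
    | succ n =>
      have h1 : (Int.ofNat (n+1)) + 1 = ((n + 2 : ℕ) : ℤ) := by simp only [Int.ofNat_eq_natCast]; omega
      have h2 : (Int.ofNat (n+1)) - 1 = ((n : ℕ) : ℤ) := by simp only [Int.ofNat_eq_natCast]; omega
      rw [h1, h2, FareySeq_natCast, FareySeq_natCast]
      show p (n + 2) = e (n+1 : ℕ) • p (n+1) - p n
      rw [hp]
      rfl
  · cases n with
    | zero =>
      have h1 : (Int.negSucc 0) + 1 = ((0 : ℕ) : ℤ) := by decide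
      have h2 : (Int.negSucc 0) - 1 = -((2 : ℕ) : ℤ) := by decide
      have h3 : (Int.negSucc 0) = -((1 : ℕ) : ℤ) := by decide
      rw [h1, h2, h3, FareySeq_natCast, FareySeq_neg, FareySeq_neg]
      show x = e (-(1:ℕ):ℤ) • q 1 - q 2
      have : q 2 = e (-(1:ℕ):ℤ) • q 1 - q 0 := rfl
      rw [this, sub_sub_cancel]
      rfl
    | succ n =>
      have h1 : (Int.negSucc (n+1)) + 1 = -((n + 1 : ℕ) : ℤ) := by
        rw [Int.negSucc_eq]; push_cast; ring
      have h2 : (Int.negSucc (n+1)) - 1 = -((n + 3 : ℕ) : ℤ) := by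
        rw [Int.negSucc_eq]; push_cast; ring
      have h3 : (Int.negSucc (n+1)) = -((n + 2 : ℕ) : ℤ) := by
        rw [Int.negSucc_eq]; push_cast; ring
      rw [h1, h2, h3, FareySeq_neg, FareySeq_neg, FareySeq_neg]
      show q (n+1) = e (-((n+2:ℕ) : ℤ)) • q (n+2) - q (n+3)
      have : q (n+3) = e (-((n+2:ℕ):ℤ)) • q (n+2) - q (n+1) := rfl
      rw [this, sub_sub_cancel]

theorem path_from_itinerary {R : Type*} [CommRing R] (e : ℤ → R) (a b c d : R)
    (h : a * d - b * c = 1) :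
    ∃! f : ℤ → R × R,
      (∀ i : ℤ, (f i).1 * (f (i + 1)).2 - (f i).2 * (f (i + 1)).1 = 1) ∧
      f 0 = (a, b) ∧ f 1 = (c, d) ∧
      ∀ i : ℤ, (f (i - 1)).1 + (f (i + 1)).1 = e i * (f i).1 ∧
        (f (i - 1)).2 + (f (i + 1)).2 = e i * (f i).2 := by
  set f := FareySeq e (a, b) (c, d) with hfdef
  have hf0 : f 0 = (a, b) := rfl
  have hf1 : f 1 = (c, d) := rfl
  have hstep : ∀ i : ℤ, f (i + 1) = e i • f i - f (i - 1) := FareySeq_step e (a, b) (c, d)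
  have hstep' : ∀ i : ℤ, f (i - 1) = e i • f i - f (i + 1) := by
    intro i; rw [hstep i]; abel
  have hrec : ∀ i : ℤ, f (i - 1) + f (i + 1) = e i • f i := by
    intro i; rw [hstep i]; abel
  have hdet : ∀ i : ℤ, (f i).1 * (f (i + 1)).2 - (f i).2 * (f (i + 1)).1 = 1 := by
    intro i
    induction i using Int.induction_on with
    | zero => rw [show (0:ℤ)+1 = 1 by norm_num, hf0, hf1]; exact h
    | succ n ih =>
      have h2 : f (n + 1 + 1) = e (n + 1) • f (n + 1) - f n := by
        have := hstep (n + 1)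
        rwa [show (n:ℤ) + 1 - 1 = n by ring] at this
      rw [h2, Prod.fst_sub, Prod.snd_sub, Prod.smul_fst, Prod.smul_snd, smul_eq_mul, smul_eq_mul]
      linear_combination ih
    | pred n ih =>
      have h2 : f (-n - 1) = e (-n) • f (-n) - f (-n + 1) := hstep' (-n)
      rw [show (-n:ℤ) - 1 + 1 = -n by ring, h2, Prod.fst_sub, Prod.snd_sub, Prod.smul_fst,
        Prod.smul_snd, smul_eq_mul, smul_eq_mul]
      linear_combination ih
  refine ⟨f, ⟨hdet, hf0, hf1, fun i => ?_⟩, fun g hg => ?_⟩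
  · have := hrec i
    rw [Prod.ext_iff, Prod.fst_add, Prod.snd_add, Prod.smul_fst, Prod.smul_snd,
      smul_eq_mul, smul_eq_mul] at this
    exact this
  · obtain ⟨-, hg0, hg1, hgrec⟩ := hg
    have hgrec' : ∀ i : ℤ, g (i - 1) + g (i + 1) = e i • g i := by
      intro i
      obtain ⟨h1', h2'⟩ := hgrec i
      rw [Prod.ext_iff, Prod.fst_add, Prod.snd_add, Prod.smul_fst, Prod.smul_snd,
        smul_eq_mul, smul_eq_mul]
      exact ⟨h1', h2'⟩
    have hgstep : ∀ i : ℤ, g (i + 1) = e i • g i - g (i - 1) := by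
      intro i; rw [← hgrec' i]; abel
    have hgstep' : ∀ i : ℤ, g (i - 1) = e i • g i - g (i + 1) := by
      intro i; rw [← hgrec' i]; abel
    have key : ∀ i : ℤ, g i = f i ∧ g (i + 1) = f (i + 1) := by
      intro i
      induction i using Int.induction_on with
      | zero =>
        refine ⟨hg0.trans hf0.symm, ?_⟩
        rw [show (0:ℤ)+1 = 1 by norm_num]
        exact hg1.trans hf1.symm
      | succ n ih =>
        refine ⟨ih.2, ?_⟩
        have hg2 := hgstep (n + 1)
        have hf2 := hstep (n + 1)
        rw [show (n:ℤ) + 1 - 1 = n by ring] at hg2 hf2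
        rw [hg2, hf2, ih.1, ih.2]
      | pred n ih =>
        have hg2 := hgstep' (-n)
        have hf2 := hstep' (-n)
        refine ⟨?_, by rw [show (-n:ℤ) - 1 + 1 = -n by ring]; exact ih.1⟩
        rw [hg2, hf2, ih.1, show (-n:ℤ) + 1 = -n + 1 by ring, ih.2]
    funext i
    exact (key i).1
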